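/- Fix r_h ∈ ℝ, ω_0 > 0, m > 0, c_h > 0 and let a, b, c, w : ℝ → ℝ. Assume that for all r in some right-neighbourhood of r_h: a(r) < 0, b(r)² − a(r) c(r) > 0, and ω_0² + w(r)² a(r) ≥ m; and assume that as r → r_h from the right: b(r) → 0, b(r)² − a(r) c(r) → 0, c(r) → c_h, and w is bounded. Define R_±(r) = ±(b(r)/a(r)) ω_0 + (1/a(r)) √(b(r)² − a(r) c(r)) √(ω_0² + w(r)² a(r)). Then R_+(r) → −∞ and R_−(r) → −∞ as r → r_h from the right. -/

import Mathlib

open Real Filter Topology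
set_option maxHeartbeats 1000000

lemma key_ineq (ω0 m aa bb cc ww : ℝ) (hω0 : 0 < ω0) (hm : 0 < m)
    (ha : aa < 0) (hDpos : 0 < bb ^ 2 - aa * cc)
    (hE : m ≤ ω0 ^ 2 + ww ^ 2 * aa) (hcpos : 0 < cc)
    (hcw : ww ^ 2 * (bb ^ 2 - aa * cc) ≤ cc * ω0 ^ 2 / 2)
    (s : ℝ) (hs : s = bb ∨ s = -bb) :
    (s / aa) * ω0 + (1 / aa) * Real.sqrt (bb ^ 2 - aa * cc)
        * Real.sqrt (ω0 ^ 2 + ww ^ 2 * aa)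
      ≤ -(cc * ω0 / 4) / Real.sqrt (bb ^ 2 - aa * cc) := by
  set D := bb ^ 2 - aa * cc with hD
  set E := ω0 ^ 2 + ww ^ 2 * aa with hEdef
  set X := Real.sqrt D * Real.sqrt E with hX
  clear_value D E X
  have hEpos : 0 < E := lt_of_lt_of_le hm hE
  have hsD : 0 < Real.sqrt D := Real.sqrt_pos.mpr hDpos
  have hXsq : X ^ 2 = D * E := by
    rw [hX, mul_pow, Real.sq_sqrt hDpos.le, Real.sq_sqrt hEpos.le]
  have hXpos : 0 < X := by rw [hX]; exact mul_pos hsD (Real.sqrt_pos.mpr hEpos)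
  have hEle : Real.sqrt E ≤ ω0 := by
    have h1 : E ≤ ω0 ^ 2 := by nlinarith [sq_nonneg ww]
    calc Real.sqrt E ≤ Real.sqrt (ω0 ^ 2) := Real.sqrt_le_sqrt h1
      _ = ω0 := by rw [Real.sqrt_sq hω0.le]
  have hXle : X ≤ ω0 * Real.sqrt D := by
    rw [hX]; nlinarith [hsD]
  have hble : |bb| ≤ Real.sqrt D := by
    apply Real.abs_le_sqrt; nlinarith
  have hs2 : s ^ 2 = bb ^ 2 := by rcases hs with h | h <;> rw [h] <;> ring
  have hsabs : -s ≤ Real.sqrt D := by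
    have h1 : |s| = |bb| := by rcases hs with h | h <;> simp [h]
    calc -s ≤ |(-s)| := le_abs_self _
      _ = |s| := abs_neg s
      _ = |bb| := h1
      _ ≤ Real.sqrt D := hble
  -- key quadratic inequality
  have hkey : X ^ 2 - (s * ω0) ^ 2 ≥ (-aa) * cc * ω0 ^ 2 / 2 := by
    have h1 : ww ^ 2 * D - cc * ω0 ^ 2 ≤ -(cc * ω0 ^ 2 / 2) := by linarith
    have h2 : aa * (-(cc * ω0 ^ 2 / 2)) ≤ aa * (ww ^ 2 * D - cc * ω0 ^ 2) :=
      mul_le_mul_of_nonpos_left h1 ha.le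
    have h3 : X ^ 2 - (s * ω0) ^ 2 = aa * (ww ^ 2 * D - cc * ω0 ^ 2) := by
      rw [hXsq, hD, hEdef]; nlinarith [hs2]
    nlinarith
  -- X + s*ω0 > 0
  have hpos : 0 < X + s * ω0 := by
    by_contra h
    push_neg at h
    have h2 : 0 ≤ X - s * ω0 := by linarith
    have h3 : (X + s * ω0) * (X - s * ω0) ≤ 0 := mul_nonpos_of_nonpos_of_nonneg h h2
    have h4 : 0 < (-aa) * cc * ω0 ^ 2 :=
      mul_pos (mul_pos (neg_pos.mpr ha) hcpos) (pow_pos hω0 2)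
    have h5 : X ^ 2 - (s * ω0) ^ 2 = (X + s * ω0) * (X - s * ω0) := by ring
    linarith [h3, h4, hkey, h5]
  -- X - s*ω0 ≤ 2*ω0*√D
  have hub : X - s * ω0 ≤ 2 * ω0 * Real.sqrt D := by
    nlinarith [mul_le_mul_of_nonneg_right hsabs hω0.le]
  -- step3
  have h5 : (-aa) * cc * ω0 / 4 ≤ (s * ω0 + X) * Real.sqrt D := by
    have hmul := mul_le_mul_of_nonneg_left hub hpos.le
    have e1 : (X + s * ω0) * (X - s * ω0) = X ^ 2 - (s * ω0) ^ 2 := by ring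
    have e2 : (X + s * ω0) * (2 * ω0 * Real.sqrt D)
        = (2 * ω0) * ((s * ω0 + X) * Real.sqrt D) := by ring
    have e3 : (2 * ω0) * ((-aa) * cc * ω0 / 4) = (-aa) * cc * ω0 ^ 2 / 2 := by ring
    have h5a : (2 * ω0) * ((-aa) * cc * ω0 / 4)
        ≤ (2 * ω0) * ((s * ω0 + X) * Real.sqrt D) := by linarith [hmul, hkey]
    exact le_of_mul_le_mul_left h5a (by positivity)
  have h6 : (s * ω0 + X) / aa ≤ -(cc * ω0 / 4) / Real.sqrt D := by
    rw [div_le_iff_of_neg ha]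
    have h7 : -(cc * ω0 / 4) / Real.sqrt D * aa = ((-aa) * cc * ω0 / 4) / Real.sqrt D := by
      ring
    rw [h7]
    rw [div_le_iff₀ hsD]
    linarith
  calc (s / aa) * ω0 + (1 / aa) * Real.sqrt D * Real.sqrt E
      = (s * ω0 + X) / aa := by rw [hX]; ring
    _ ≤ -(cc * ω0 / 4) / Real.sqrt D := h6

theorem stmt9 (r_h ω0 m c_h : ℝ) (hω0 : 0 < ω0) (hm : 0 < m) (hch : 0 < c_h)
    (a b c w : ℝ → ℝ)
    (hcond : ∀ᶠ r in 𝓝[>] r_h,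
      a r < 0 ∧ 0 < b r ^ 2 - a r * c r ∧ m ≤ ω0 ^ 2 + w r ^ 2 * a r)
    (hb : Tendsto b (𝓝[>] r_h) (𝓝 0))
    (hdet : Tendsto (fun r => b r ^ 2 - a r * c r) (𝓝[>] r_h) (𝓝 0))
    (hc : Tendsto c (𝓝[>] r_h) (𝓝 c_h))
    (hw : ∃ M : ℝ, ∀ᶠ r in 𝓝[>] r_h, |w r| ≤ M)
    (Rp Rm : ℝ → ℝ)
    (hRp : ∀ r, Rp r = (b r / a r) * ω0 +
      (1 / a r) * Real.sqrt (b r ^ 2 - a r * c r) * Real.sqrt (ω0 ^ 2 + w r ^ 2 * a r))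
    (hRm : ∀ r, Rm r = -(b r / a r) * ω0 +
      (1 / a r) * Real.sqrt (b r ^ 2 - a r * c r) * Real.sqrt (ω0 ^ 2 + w r ^ 2 * a r)) :
    Tendsto Rp (𝓝[>] r_h) atBot ∧ Tendsto Rm (𝓝[>] r_h) atBot := by
  obtain ⟨M, hM⟩ := hw
  have hε : (0 : ℝ) < c_h * ω0 ^ 2 / (4 * (M ^ 2 + 1)) := by positivity
  have hDsmall : ∀ᶠ r in 𝓝[>] r_h,
      b r ^ 2 - a r * c r < c_h * ω0 ^ 2 / (4 * (M ^ 2 + 1)) :=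
    hdet.eventually_lt_const hε
  have hcbig : ∀ᶠ r in 𝓝[>] r_h, c_h / 2 < c r :=
    hc.eventually_const_lt (by linarith)
  have hbound : ∀ᶠ r in 𝓝[>] r_h,
      Rp r ≤ -(c_h / 2 * ω0 / 4) / Real.sqrt (b r ^ 2 - a r * c r) ∧
      Rm r ≤ -(c_h / 2 * ω0 / 4) / Real.sqrt (b r ^ 2 - a r * c r) := by
    filter_upwards [hcond, hM, hDsmall, hcbig] with r hr hMr hDs hcr
    obtain ⟨ha, hD, hE⟩ := hr
    have hsD : 0 < Real.sqrt (b r ^ 2 - a r * c r) := Real.sqrt_pos.mpr hD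
    have hcw : w r ^ 2 * (b r ^ 2 - a r * c r) ≤ c r * ω0 ^ 2 / 2 := by
      have h1 : w r ^ 2 ≤ M ^ 2 := by
        have := sq_abs (w r)
        nlinarith [abs_nonneg (w r)]
      have h2 : w r ^ 2 * (b r ^ 2 - a r * c r) ≤ M ^ 2 * (b r ^ 2 - a r * c r) :=
        mul_le_mul_of_nonneg_right h1 hD.le
      have h3 : M ^ 2 * (b r ^ 2 - a r * c r)
          ≤ M ^ 2 * (c_h * ω0 ^ 2 / (4 * (M ^ 2 + 1))) :=
        mul_le_mul_of_nonneg_left hDs.le (sq_nonneg M)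
      have h4 : M ^ 2 * (c_h * ω0 ^ 2 / (4 * (M ^ 2 + 1))) ≤ c_h * ω0 ^ 2 / 4 := by
        rw [← mul_div_assoc]
        rw [div_le_div_iff₀ (by positivity) (by norm_num)]
        nlinarith [sq_nonneg M, mul_pos hch (pow_pos hω0 2)]
      have h7 : c_h * ω0 ^ 2 / 4 ≤ c r * ω0 ^ 2 / 2 := by
        nlinarith [pow_pos hω0 2]
      linarith
    have hcpos : 0 < c r := by linarith
    have hmono : -(c r * ω0 / 4) / Real.sqrt (b r ^ 2 - a r * c r)
        ≤ -(c_h / 2 * ω0 / 4) / Real.sqrt (b r ^ 2 - a r * c r) := by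
      have h8 : -(c r * ω0 / 4) ≤ -(c_h / 2 * ω0 / 4) := by nlinarith
      rw [div_le_div_iff₀ hsD hsD]
      linarith [mul_le_mul_of_nonneg_right h8 hsD.le]
    constructor
    · rw [hRp r]
      exact le_trans (key_ineq ω0 m (a r) (b r) (c r) (w r) hω0 hm ha hD hE hcpos hcw
        (b r) (Or.inl rfl)) hmono
    · rw [hRm r]
      have := key_ineq ω0 m (a r) (b r) (c r) (w r) hω0 hm ha hD hE hcpos hcw
        (-(b r)) (Or.inr rfl)
      refine le_trans (le_trans (le_of_eq ?_) this) hmono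
      ring
  have hgoal : Tendsto (fun r => -(c_h / 2 * ω0 / 4) / Real.sqrt (b r ^ 2 - a r * c r))
      (𝓝[>] r_h) atBot := by
    have h1 : Tendsto (fun r => Real.sqrt (b r ^ 2 - a r * c r)) (𝓝[>] r_h) (𝓝[>] 0) := by
      rw [tendsto_nhdsWithin_iff]
      constructor
      · have := (Real.continuous_sqrt.tendsto 0).comp hdet
        simpa [Function.comp_def] using this
      · filter_upwards [hcond] with r hr using Real.sqrt_pos.mpr hr.2.1
    have h2 : Tendsto (fun r => (Real.sqrt (b r ^ 2 - a r * c r))⁻¹) (𝓝[>] r_h) atTop :=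
      tendsto_inv_nhdsGT_zero.comp h1
    have h3 : Tendsto (fun r => (c_h / 2 * ω0 / 4) *
        (Real.sqrt (b r ^ 2 - a r * c r))⁻¹) (𝓝[>] r_h) atTop :=
      h2.const_mul_atTop (by positivity)
    have heq : (fun r => -(c_h / 2 * ω0 / 4) / Real.sqrt (b r ^ 2 - a r * c r))
        = fun r => -((c_h / 2 * ω0 / 4) * (Real.sqrt (b r ^ 2 - a r * c r))⁻¹) := by
      funext r
      rw [neg_div, div_eq_mul_inv]
    rw [heq]
    exact tendsto_neg_atTop_atBot.comp h3
  exact ⟨tendsto_atBot_mono' _ (hbound.mono fun r h => h.1) hgoal,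
    tendsto_atBot_mono' _ (hbound.mono fun r h => h.2) hgoal⟩
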